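/- Let d be real with 0 < d < 1/2, let c be real, and let γ : ℕ → ℝ be a sequence such that γ(h) · h^(1-2d) → c as h → ∞. Then n^(1-2d) · (1/n) [ 2 ∑_{j=1}^{n-1} (1 - j/n) γ(j) + γ(0) ] → c / ( d (2d + 1) ) as n → ∞. (Hence for a stationary long-memory process with γ(h) ∼ c_γ h^(2d-1), the variance of the sample mean satisfies Var(ȳ) ∼ n^(2d-1) c_γ / (d(2d+1)).) -/

import Mathlib

open Real Filter Finset


lemma sum_rpow_bound (a : ℝ) (ha : 0 < a) (n : ℕ) :
    |(∑ j ∈ Finset.Icc 1 n, (j : ℝ) ^ (a - 1)) - (((n : ℝ) + 1) ^ a - 1) / a| ≤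
      1 + ((n : ℝ) + 1) ^ (a - 1) := by
  set f : ℝ → ℝ := fun x => x ^ (a - 1) with hf
  set s : ℝ := ∑ j ∈ Finset.Icc 1 n, (j : ℝ) ^ (a - 1) with hs
  have hp : (0:ℝ) ≤ ((n:ℝ)+1) ^ (a-1) := Real.rpow_nonneg (by positivity) _
  have hre : ∀ m : ℕ, ∑ i ∈ Finset.range m, f (1 + (i:ℕ)) = ∑ j ∈ Finset.Icc 1 m, (j:ℝ) ^ (a-1) := by
    intro m
    rw [← Finset.Ico_add_one_right_eq_Icc, Finset.sum_Ico_eq_sum_range]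
    simp only [hf]
    apply Finset.sum_congr rfl
    intro i _
    push_cast
    ring_nf
  have hre1 : ∑ i ∈ Finset.range n, f (1 + (i:ℝ)) = s := by
    rw [hs, ← hre n]
  have hre2 : ∑ i ∈ Finset.range n, f (1 + ((i:ℕ)+1:ℕ)) = s - 1 + ((n:ℝ)+1) ^ (a-1) := by
    have e1 : ∑ i ∈ Finset.range n, f (1 + ((i:ℕ)+1:ℕ))
        = (∑ i ∈ Finset.range (n+1), f (1 + (i:ℕ))) - f 1 := by
      rw [Finset.sum_range_succ' (fun i => f (1 + (i:ℕ)))]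
      push_cast
      ring_nf
    have e2 : ∑ i ∈ Finset.range (n+1), f (1 + (i:ℕ)) = s + ((n:ℝ)+1) ^ (a-1) := by
      rw [hre (n+1), ← Finset.Ico_add_one_right_eq_Icc, Finset.sum_Ico_succ_top (by omega), Finset.Ico_add_one_right_eq_Icc]
      rw [hs]; push_cast; ring
    have e3 : f 1 = 1 := Real.one_rpow _
    rw [e1, e2, e3]; ring
  have hint : ∫ x in (1:ℝ)..(1 + (n:ℕ)), f x = (((n:ℝ)+1) ^ a - 1) / a := by
    rw [hf]
    rw [integral_rpow (Or.inl (by linarith))]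
    norm_num
    rw [add_comm (1:ℝ)]
  rcases le_or_gt a 1 with hc | hc
  · -- antitone case
    have hanti : AntitoneOn f (Set.Icc (1:ℝ) (1 + (n:ℕ))) := by
      intro x hx y hy hxy
      exact Real.rpow_le_rpow_of_nonpos (lt_of_lt_of_le one_pos hx.1) hxy (by linarith)
    have lower := hanti.integral_le_sum
    have upper := hanti.sum_le_integral
    rw [hint] at lower upper
    rw [hre1] at lower
    rw [hre2] at upper
    rw [abs_le]
    constructor <;> nlinarith
  · have hmono : MonotoneOn f (Set.Icc (1:ℝ) (1 + (n:ℕ))) := by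
      intro x hx y hy hxy
      exact Real.rpow_le_rpow (by linarith [hx.1]) hxy (by linarith)
    have upper := hmono.sum_le_integral
    have lower := hmono.integral_le_sum
    rw [hint] at lower upper
    rw [hre1] at upper
    rw [hre2] at lower
    rw [abs_le]
    constructor <;> nlinarith

lemma tendsto_nat_rpow_neg {a : ℝ} (ha : 0 < a) :
    Tendsto (fun n : ℕ => (n : ℝ) ^ (-a)) atTop (nhds 0) :=
  (tendsto_rpow_neg_atTop ha).comp tendsto_natCast_atTop_atTop

lemma sum_rpow_div_tendsto (a : ℝ) (ha : 0 < a) :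
    Tendsto (fun n : ℕ => (∑ j ∈ Finset.Icc 1 (n-1), (j : ℝ) ^ (a - 1)) / (n : ℝ) ^ a)
      atTop (nhds (1/a)) := by
  set s : ℕ → ℝ := fun m => ∑ j ∈ Finset.Icc 1 m, (j : ℝ) ^ (a - 1) with hsdef
  have key : ∀ n : ℕ, 1 ≤ n → |s (n-1) - ((n:ℝ) ^ a - 1) / a| ≤ 1 + (n:ℝ) ^ (a-1) := by
    intro n hn
    have := sum_rpow_bound a ha (n-1)
    have hc : ((n-1 : ℕ) : ℝ) + 1 = (n : ℝ) := by
      rw [Nat.cast_sub hn]; ring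
    rwa [hc] at this
  have h0 : Tendsto (fun n : ℕ => (s (n-1) - ((n:ℝ) ^ a - 1)/a) / (n:ℝ) ^ a) atTop (nhds 0) := by
    apply squeeze_zero_norm' (a := fun n : ℕ => (n:ℝ) ^ (-a) + 1 / n)
    · filter_upwards [eventually_ge_atTop 1] with n hn
      have hn0 : (0:ℝ) < (n:ℝ) := by positivity
      have hna : (0:ℝ) < (n:ℝ) ^ a := Real.rpow_pos_of_pos hn0 _
      rw [norm_div, Real.norm_eq_abs, Real.norm_eq_abs, abs_of_pos hna, div_le_iff₀ hna]
      calc |s (n-1) - ((n:ℝ) ^ a - 1)/a| ≤ 1 + (n:ℝ) ^ (a-1) := key n hn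
        _ = ((n:ℝ) ^ (-a) + 1/n) * (n:ℝ) ^ a := by
            rw [add_mul, ← Real.rpow_add hn0]
            rw [show -a + a = 0 by ring, Real.rpow_zero]
            congr 1
            rw [div_mul_eq_mul_div, one_mul, eq_div_iff hn0.ne']
            rw [← Real.rpow_add_one hn0.ne']
            ring_nf
    · simpa using (tendsto_nat_rpow_neg ha).add tendsto_one_div_atTop_nhds_zero_nat
  have h2 : Tendsto (fun n : ℕ => (((n:ℝ) ^ a - 1)/a) / (n:ℝ) ^ a) atTop (nhds (1/a)) := by
    have : Tendsto (fun n : ℕ => (1 - (n:ℝ) ^ (-a)) / a) atTop (nhds (1/a)) := by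
      have := (tendsto_const_nhds (x := (1:ℝ))).sub (tendsto_nat_rpow_neg ha)
      simpa using this.div_const a
    apply this.congr'
    filter_upwards [eventually_ge_atTop 1] with n hn
    have hn0 : (0:ℝ) < (n:ℝ) := by positivity
    have hna : (0:ℝ) < (n:ℝ) ^ a := Real.rpow_pos_of_pos hn0 _
    rw [div_div, div_eq_div_iff (by positivity) (by positivity)]
    rw [sub_mul, Real.rpow_neg hn0.le]
    field_simp
  have := h0.add h2
  rw [zero_add] at this
  apply this.congr
  intro n
  rw [← add_div, sub_add_cancel]

lemma toeplitz_tendsto (w : ℕ → ℕ → ℝ) (b : ℕ → ℝ) (L c : ℝ)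
    (hw0 : ∀ n, ∀ j ∈ Finset.Icc 1 (n-1), 0 ≤ w n j)
    (hwsum : Tendsto (fun n => ∑ j ∈ Finset.Icc 1 (n-1), w n j) atTop (nhds L))
    (hwj : ∀ j : ℕ, Tendsto (fun n => w n j) atTop (nhds 0))
    (hb : Tendsto b atTop (nhds c)) :
    Tendsto (fun n => ∑ j ∈ Finset.Icc 1 (n-1), w n j * b j) atTop (nhds (L * c)) := by
  have main : Tendsto (fun n => ∑ j ∈ Finset.Icc 1 (n-1), w n j * (b j - c)) atTop (nhds 0) := by
    rw [Metric.tendsto_atTop]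
    intro ε hε
    set ε₁ : ℝ := ε / (2 * (|L| + 1)) with hε₁def
    have hL1 : 0 < |L| + 1 := by positivity
    have hε₁ : 0 < ε₁ := by positivity
    obtain ⟨N, hN⟩ := (Metric.tendsto_atTop.1 hb ε₁ hε₁)
    have hhead : Tendsto (fun n => ∑ j ∈ Finset.Icc 1 (N-1), |w n j| * |b j - c|) atTop (nhds 0) := by
      have : Tendsto (fun n => ∑ j ∈ Finset.Icc 1 (N-1), |w n j| * |b j - c|) atTop
          (nhds (∑ j ∈ Finset.Icc 1 (N-1), |(0:ℝ)| * |b j - c|)) := by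
        apply tendsto_finset_sum
        intro j _
        exact ((hwj j).abs).mul_const _
      simpa using this
    have hev1 : ∀ᶠ n in atTop, ∑ j ∈ Finset.Icc 1 (N-1), |w n j| * |b j - c| < ε/2 := by
      obtain ⟨M, hM⟩ := Metric.tendsto_atTop.1 hhead (ε/2) (by positivity)
      refine eventually_atTop.2 ⟨M, fun n hn => ?_⟩
      have := hM n hn
      rw [Real.dist_eq, sub_zero] at this
      exact lt_of_abs_lt this
    have hev2 : ∀ᶠ n in atTop, ∑ j ∈ Finset.Icc 1 (n-1), w n j ≤ |L| + 1 := by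
      obtain ⟨M, hM⟩ := Metric.tendsto_atTop.1 hwsum 1 one_pos
      refine eventually_atTop.2 ⟨M, fun n hn => ?_⟩
      have := hM n hn
      rw [Real.dist_eq] at this
      have h1 := abs_lt.1 this
      linarith [le_abs_self L, h1.2]
    rw [eventually_atTop] at hev1 hev2
    obtain ⟨M1, hM1⟩ := hev1
    obtain ⟨M2, hM2⟩ := hev2
    refine ⟨max M1 M2, fun n hn => ?_⟩
    have hn1 := hM1 n (le_trans (le_max_left _ _) hn)
    have hn2 := hM2 n (le_trans (le_max_right _ _) hn)
    rw [Real.dist_eq, sub_zero]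
    have habs : |∑ j ∈ Finset.Icc 1 (n-1), w n j * (b j - c)|
        ≤ ∑ j ∈ Finset.Icc 1 (n-1), w n j * |b j - c| := by
      refine (Finset.abs_sum_le_sum_abs _ _).trans ?_
      apply Finset.sum_le_sum
      intro j hj
      rw [abs_mul, abs_of_nonneg (hw0 n j hj)]
    refine lt_of_le_of_lt habs ?_
    rw [← Finset.sum_filter_add_sum_filter_not (Finset.Icc 1 (n-1)) (· < N)]
    have hpart1 : ∑ j ∈ (Finset.Icc 1 (n-1)).filter (· < N), w n j * |b j - c|
        ≤ ∑ j ∈ Finset.Icc 1 (N-1), |w n j| * |b j - c| := by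
      calc ∑ j ∈ (Finset.Icc 1 (n-1)).filter (· < N), w n j * |b j - c|
          ≤ ∑ j ∈ (Finset.Icc 1 (n-1)).filter (· < N), |w n j| * |b j - c| := by
            apply Finset.sum_le_sum
            intro j _
            exact mul_le_mul_of_nonneg_right (le_abs_self _) (abs_nonneg _)
        _ ≤ ∑ j ∈ Finset.Icc 1 (N-1), |w n j| * |b j - c| := by
            apply Finset.sum_le_sum_of_subset_of_nonneg
            · intro j hj
              simp only [Finset.mem_filter, Finset.mem_Icc] at hj ⊢
              omega
            · intro j _ _
              positivity
    have hpart2 : ∑ j ∈ (Finset.Icc 1 (n-1)).filter (fun j => ¬ (j < N)), w n j * |b j - c|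
        ≤ ε/2 := by
      calc ∑ j ∈ (Finset.Icc 1 (n-1)).filter (fun j => ¬ (j < N)), w n j * |b j - c|
          ≤ ∑ j ∈ (Finset.Icc 1 (n-1)).filter (fun j => ¬ (j < N)), w n j * ε₁ := by
            apply Finset.sum_le_sum
            intro j hj
            simp only [Finset.mem_filter, not_lt] at hj
            have hbj : |b j - c| ≤ ε₁ := by
              have := hN j hj.2
              rw [Real.dist_eq] at this
              exact this.le
            exact mul_le_mul_of_nonneg_left hbj (hw0 n j hj.1)
        _ = (∑ j ∈ (Finset.Icc 1 (n-1)).filter (fun j => ¬ (j < N)), w n j) * ε₁ := by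
            rw [Finset.sum_mul]
        _ ≤ (∑ j ∈ Finset.Icc 1 (n-1), w n j) * ε₁ := by
            apply mul_le_mul_of_nonneg_right _ hε₁.le
            apply Finset.sum_le_sum_of_subset_of_nonneg (Finset.filter_subset _ _)
            intro j hj _
            exact hw0 n j hj
        _ ≤ (|L| + 1) * ε₁ := mul_le_mul_of_nonneg_right hn2 hε₁.le
        _ = ε/2 := by
            rw [hε₁def]
            field_simp
    calc (∑ j ∈ (Finset.Icc 1 (n-1)).filter (· < N), w n j * |b j - c|)
          + ∑ j ∈ (Finset.Icc 1 (n-1)).filter (fun j => ¬ (j < N)), w n j * |b j - c|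
        < ε/2 + ε/2 := add_lt_add_of_lt_of_le (lt_of_le_of_lt hpart1 hn1) hpart2
      _ = ε := by ring
  have := main.add (hwsum.mul_const c)
  rw [zero_add] at this
  apply this.congr
  intro n
  rw [Finset.sum_mul, ← Finset.sum_add_distrib]
  apply Finset.sum_congr rfl
  intro j _
  ring
/-- if `γ(h)·h^(1-2d) → c` with `0 < d < 1/2`, then the exact variance of
the sample mean, `(1/n)[2∑_{j=1}^{n-1}(1 - j/n)γ(j) + γ(0)]`, multiplied by `n^(1-2d)`,
converges to `c/(d(2d+1))`. -/
theorem sample_mean_variance_asymptotics (d c : ℝ) (hd1 : 0 < d) (hd2 : d < 1/2)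
    (γ : ℕ → ℝ)
    (hγ : Tendsto (fun h : ℕ => γ h * (h : ℝ) ^ (1 - 2 * d)) atTop (nhds c)) :
    Tendsto (fun n : ℕ =>
        (n : ℝ) ^ (1 - 2 * d) *
          ((1 / (n : ℝ)) *
            (2 * ∑ j ∈ Finset.Icc 1 (n - 1), (1 - (j : ℝ) / (n : ℝ)) * γ j + γ 0)))
      atTop (nhds (c / (d * (2 * d + 1)))) := by
  have hd2' : 0 < 2 * d := by linarith
  have hd3 : 0 < 2 * d + 1 := by linarith
  set w : ℕ → ℕ → ℝ := fun n j => (1 - (j:ℝ)/(n:ℝ)) * (j:ℝ) ^ (2*d - 1) / (n:ℝ) ^ (2*d) with hw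
  set b : ℕ → ℝ := fun h => γ h * (h:ℝ) ^ (1 - 2*d) with hb
  -- nonnegativity of weights
  have hw0 : ∀ n, ∀ j ∈ Finset.Icc 1 (n-1), 0 ≤ w n j := by
    intro n j hj
    rw [Finset.mem_Icc] at hj
    have hn2 : 2 ≤ n := by omega
    have hnpos : (0:ℝ) < n := by positivity
    have hjn : (j:ℝ) / n ≤ 1 := by
      rw [div_le_one hnpos]
      exact_mod_cast le_trans hj.2 (by omega)
    apply div_nonneg (mul_nonneg (by linarith) (Real.rpow_nonneg (by positivity) _))
      (Real.rpow_nonneg hnpos.le _)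
  -- each column tends to zero
  have hwj : ∀ j : ℕ, Tendsto (fun n => w n j) atTop (nhds 0) := by
    intro j
    have hnum : Tendsto (fun n : ℕ => (1 - (j:ℝ)/(n:ℝ)) * (j:ℝ) ^ (2*d - 1)) atTop
        (nhds ((1 - 0) * (j:ℝ) ^ (2*d-1))) :=
      (tendsto_const_nhds.sub (tendsto_const_div_atTop_nhds_zero_nat _)).mul_const _
    have hden : Tendsto (fun n : ℕ => (n:ℝ) ^ (2*d)) atTop atTop :=
      (tendsto_rpow_atTop hd2').comp tendsto_natCast_atTop_atTop
    exact hnum.div_atTop hden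
  -- sum of weights
  have hwsum : Tendsto (fun n => ∑ j ∈ Finset.Icc 1 (n-1), w n j) atTop
      (nhds (1/(2*d) - 1/(2*d+1))) := by
    have h1 := sum_rpow_div_tendsto (2*d) hd2'
    have h2 := sum_rpow_div_tendsto (2*d+1) hd3
    have h2' : Tendsto (fun n : ℕ => (∑ j ∈ Finset.Icc 1 (n-1), (j : ℝ) ^ (2*d)) / (n : ℝ) ^ (2*d+1))
        atTop (nhds (1/(2*d+1))) := by
      convert h2 using 3 with n
      ring_nf
    apply (h1.sub h2').congr'
    filter_upwards [eventually_ge_atTop 1] with n hn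
    have hnpos : (0:ℝ) < n := by exact_mod_cast Nat.pos_of_ne_zero (by omega)
    rw [Finset.sum_div, Finset.sum_div, ← Finset.sum_sub_distrib]
    apply Finset.sum_congr rfl
    intro j hj
    rw [Finset.mem_Icc] at hj
    have hjpos : (0:ℝ) < j := by exact_mod_cast hj.1
    rw [hw]
    have e1 : (j:ℝ) ^ (2*d) = (j:ℝ) ^ (2*d-1) * j := by
      rw [← Real.rpow_add_one hjpos.ne']; ring_nf
    have e2 : (n:ℝ) ^ (2*d+1) = (n:ℝ) ^ (2*d) * n := by
      rw [← Real.rpow_add_one hnpos.ne']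
    rw [e1, e2]
    have hna : (n:ℝ) ^ (2*d) ≠ 0 := (Real.rpow_pos_of_pos hnpos _).ne'
    field_simp
  have htop := toeplitz_tendsto w b (1/(2*d) - 1/(2*d+1)) c hw0 hwsum hwj hγ
  -- combine
  have hfinal := (htop.const_mul 2).add ((tendsto_nat_rpow_neg hd2').const_mul (γ 0))
  have heq : 2 * ((1/(2*d) - 1/(2*d+1)) * c) + γ 0 * 0 = c / (d * (2*d+1)) := by
    field_simp
    ring
  rw [heq] at hfinal
  apply hfinal.congr'
  filter_upwards [eventually_ge_atTop 1] with n hn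
  have hnpos : (0:ℝ) < n := by exact_mod_cast Nat.pos_of_ne_zero (by omega)
  have hsum_eq : ∑ j ∈ Finset.Icc 1 (n-1), w n j * b j
      = (∑ j ∈ Finset.Icc 1 (n-1), (1 - (j:ℝ)/(n:ℝ)) * γ j) / (n:ℝ) ^ (2*d) := by
    rw [Finset.sum_div]
    apply Finset.sum_congr rfl
    intro j hj
    rw [Finset.mem_Icc] at hj
    have hjpos : (0:ℝ) < j := by exact_mod_cast hj.1
    rw [hw, hb]
    have e : (j:ℝ) ^ (2*d-1) * (j:ℝ) ^ (1-2*d) = 1 := by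
      rw [← Real.rpow_add hjpos]
      norm_num
    calc (1 - (j:ℝ)/(n:ℝ)) * (j:ℝ) ^ (2*d - 1) / (n:ℝ) ^ (2*d) * (γ j * (j:ℝ) ^ (1 - 2*d))
        = (1 - (j:ℝ)/(n:ℝ)) * γ j / (n:ℝ) ^ (2*d) * ((j:ℝ) ^ (2*d-1) * (j:ℝ) ^ (1-2*d)) := by
          ring
      _ = (1 - (j:ℝ)/(n:ℝ)) * γ j / (n:ℝ) ^ (2*d) := by rw [e, mul_one]
  have hpow : (n:ℝ) ^ (1 - 2*d) * (1/(n:ℝ)) = (n:ℝ) ^ (-(2*d)) := by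
    rw [one_div, ← Real.rpow_neg_one (n:ℝ), ← Real.rpow_add hnpos]
    ring_nf
  rw [hsum_eq]
  rw [← mul_assoc, hpow]
  rw [Real.rpow_neg hnpos.le]
  field_simp
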